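/- arXiv:2006.06068 — 3 statements merged into one kernel-verified Lean document; each statement's English description precedes it below -/
import Mathlib

section
/- With the setup of the variance-reduced coordinate estimator: x, g̃ ∈ ℝ^d, r uniform on {1,...,d}, g̃'_r = ∂_r f(x), g̃'_i = g̃_i for i ≠ r, F̃ = g̃ + d(g̃' − g̃), and Ẽ = ∇f(x) − F̃; then E_r[|Ẽ|²] = (d−1)|∇f(x) − g̃|². -/
open Finset

lemma rcad_norm_sq {d : ℕ} (w : EuclideanSpace ℝ (Fin d)) :
    ‖w‖ ^ 2 = ∑ i : Fin d, (w i) ^ 2 := by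
  rw [EuclideanSpace.norm_eq, Real.sq_sqrt (by positivity)]
  simp [sq_abs]

/-- Variance of the variance-reduced coordinate estimator: with `g̃'` equal to `g̃` updated at
the random coordinate `r` to `∂_r f(x)`, `F̃ = g̃ + d(g̃' − g̃)` and `Ẽ = ∇f(x) − F̃`, the
expectation over the uniformly random coordinate `r` of `|Ẽ|²` equals
`(d−1)|∇f(x) − g̃|²`. -/
theorem rcad_estimator_variance (d : ℕ) (hd : 0 < d)
    (f : EuclideanSpace ℝ (Fin d) → ℝ) (hf : Differentiable ℝ f)
    (x gt : EuclideanSpace ℝ (Fin d)) :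
    ((d : ℝ))⁻¹ * ∑ r : Fin d,
        ‖gradient f x -
          (gt + (d : ℝ) • ((gradient f x r - gt r) • EuclideanSpace.single r (1 : ℝ)))‖ ^ 2
      = ((d : ℝ) - 1) * ‖gradient f x - gt‖ ^ 2 := by
  set G := gradient f x with hG
  have key : ∀ r : Fin d,
      ‖G - (gt + (d : ℝ) • ((G r - gt r) • EuclideanSpace.single r (1 : ℝ)))‖ ^ 2
        = ‖G - gt‖ ^ 2 + ((d : ℝ) ^ 2 - 2 * d) * (G r - gt r) ^ 2 := by
    intro r
    rw [rcad_norm_sq, rcad_norm_sq]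
    have : ∀ i : Fin d,
        ((G - (gt + (d : ℝ) • ((G r - gt r) • EuclideanSpace.single r (1 : ℝ)))) i) ^ 2
          = (G i - gt i) ^ 2 + (if i = r then ((d:ℝ)^2 - 2*d) * (G r - gt r)^2 else 0) := by
      intro i
      have h1 : (G - (gt + (d : ℝ) • ((G r - gt r) • EuclideanSpace.single r (1 : ℝ)))) i
          = G i - gt i - (d : ℝ) * ((G r - gt r) * (if i = r then (1:ℝ) else 0)) := by
        simp [EuclideanSpace.single_apply, sub_sub]
      rw [h1]
      by_cases h : i = r
      · subst h; simp; ring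
      · simp [h]
    simp only [this, Finset.sum_add_distrib, Finset.sum_ite_eq', Finset.mem_univ, if_true]
    simp
  simp only [key, Finset.sum_add_distrib, Finset.sum_const, card_univ, Fintype.card_fin,
    nsmul_eq_mul, ← Finset.mul_sum]
  have hsum : ∑ r : Fin d, (G r - gt r) ^ 2 = ‖G - gt‖ ^ 2 := by
    rw [rcad_norm_sq]
    congr 1
  rw [hsum]
  have hd' : (d : ℝ) ≠ 0 := Nat.cast_ne_zero.mpr hd.ne'
  field_simp
  ring
end

section
/- Let H be a symmetric d×d real matrix with μI ⪯ H ⪯ LI and set γ = 1/L, κ = L/μ. Then every eigenvalue λ of the 2d×2d symmetric block matrix [[(1−2h)I, 2hI − γhH],[2hI − γhH, (1−2h)I]] satisfies λ ≤ 1 − h/κ, for any 0 < h < 1. -/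
open Matrix

/-- Let `H` be a symmetric `d×d` real matrix with `μI ⪯ H ⪯ LI`, `γ = 1/L`, `κ = L/μ`.
Every eigenvalue `λ` of the symmetric block matrix
`[[(1−2h)I, 2hI − γhH],[2hI − γhH, (1−2h)I]]` satisfies `λ ≤ 1 − h/κ`, for `0 < h < 1`. -/
theorem block_matrix_eigenvalue_bound (d : ℕ)
    (H : Matrix (Fin d) (Fin d) ℝ) (hsymm : H.IsSymm)
    (μ L h : ℝ) (hμ : 0 < μ) (hμL : μ ≤ L) (hh : 0 < h) (hh1 : h < 1)
    (hlow : (H - μ • (1 : Matrix (Fin d) (Fin d) ℝ)).PosSemidef)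
    (hupp : (L • (1 : Matrix (Fin d) (Fin d) ℝ) - H).PosSemidef)
    (lam : ℝ) (v : (Fin d ⊕ Fin d) → ℝ) (hv : v ≠ 0)
    (heig : (Matrix.fromBlocks
        ((1 - 2 * h) • (1 : Matrix (Fin d) (Fin d) ℝ))
        ((2 * h) • (1 : Matrix (Fin d) (Fin d) ℝ) - ((1 / L) * h) • H)
        ((2 * h) • (1 : Matrix (Fin d) (Fin d) ℝ) - ((1 / L) * h) • H)
        ((1 - 2 * h) • (1 : Matrix (Fin d) (Fin d) ℝ))).mulVec v = lam • v) :
    lam ≤ 1 - h / (L / μ) := by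
  have hL : 0 < L := lt_of_lt_of_le hμ hμL
  set x : Fin d → ℝ := fun i => v (Sum.inl i) with hx
  set y : Fin d → ℝ := fun i => v (Sum.inr i) with hy
  have hv' : v = Sum.elim x y := by funext i; cases i <;> rfl
  rw [hv', fromBlocks_mulVec] at heig
  set A := (1 - 2 * h) • (1 : Matrix (Fin d) (Fin d) ℝ)
  set B := (2 * h) • (1 : Matrix (Fin d) (Fin d) ℝ) - ((1 / L) * h) • H
  have e1 : A.mulVec x + B.mulVec y = lam • x := by
    funext i; simpa using congrFun heig (Sum.inl i)
  have e2 : B.mulVec x + A.mulVec y = lam • y := by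
    funext i; simpa using congrFun heig (Sum.inr i)
  have hA : ∀ z : Fin d → ℝ, A.mulVec z = (1 - 2 * h) • z := by
    intro z; simp [A, smul_mulVec]
  have hB : ∀ z : Fin d → ℝ, B.mulVec z = (2 * h) • z - ((1 / L) * h) • H.mulVec z := by
    intro z; simp [B, sub_mulVec, smul_mulVec]
  set w : Fin d → ℝ := x + y with hw
  set u : Fin d → ℝ := x - y with hu
  -- key quadratic form facts
  have quad_low : ∀ z : Fin d → ℝ, μ * (z ⬝ᵥ z) ≤ z ⬝ᵥ H.mulVec z := by
    intro z
    have := hlow.dotProduct_mulVec_nonneg z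
    simp only [star_trivial, sub_mulVec, smul_mulVec, one_mulVec,
      dotProduct_sub, dotProduct_smul, smul_eq_mul] at this
    linarith
  have quad_upp : ∀ z : Fin d → ℝ, z ⬝ᵥ H.mulVec z ≤ L * (z ⬝ᵥ z) := by
    intro z
    have := hupp.dotProduct_mulVec_nonneg z
    simp only [star_trivial, sub_mulVec, smul_mulVec, one_mulVec,
      dotProduct_sub, dotProduct_smul, smul_eq_mul] at this
    linarith
  have hne : w ≠ 0 ∨ u ≠ 0 := by
    by_contra hc
    push_neg at hc
    apply hv
    rw [hv']
    have hx0 : x = 0 := by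
      have : (2:ℝ) • x = w + u := by
        funext i; simp [hw, hu, two_smul]; ring
      have h2 : (2:ℝ) • x = 0 := by rw [this, hc.1, hc.2, add_zero]
      funext i
      have := congrFun h2 i
      simp at this
      simpa using this
    have hy0 : y = 0 := by
      have : y = w - x := by funext i; simp [hw]
      rw [this, hc.1, hx0, sub_zero]
    rw [hx0, hy0]
    funext i; cases i <;> simp
  rcases hne with hwne | hune
  · -- M w = lam w with M = I - (h/L) H
    have ew : w - ((1 / L) * h) • H.mulVec w = lam • w := by
      have := congrArg₂ (· + ·) e1 e2
      simp only [hA, hB] at this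
      have hHw : H.mulVec w = H.mulVec x + H.mulVec y := by
        simp [hw, mulVec_add]
      funext i
      have h1 := congrFun this i
      have h2 := congrFun hHw i
      simp only [Pi.add_apply, Pi.sub_apply, Pi.smul_apply, smul_eq_mul, hw] at h1 h2 ⊢
      linear_combination h1 - (1 / L * h) * h2
    have hdot := congrArg (fun z => w ⬝ᵥ z) ew
    simp only [dotProduct_sub, dotProduct_smul, smul_eq_mul] at hdot
    have hs : 0 < w ⬝ᵥ w := by
      have h0 : 0 ≤ w ⬝ᵥ w := Finset.sum_nonneg fun i _ => mul_self_nonneg (w i)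
      rcases h0.lt_or_eq with hp | hp
      · exact hp
      · exact absurd ((dotProduct_self_eq_zero).mp hp.symm) hwne
    have hq := quad_low w
    have hcoef : (0:ℝ) ≤ (1 / L) * h := by positivity
    have key : lam * (w ⬝ᵥ w) ≤ (1 - h * μ / L) * (w ⬝ᵥ w) := by
      have hint := mul_le_mul_of_nonneg_left hq hcoef
      linear_combination -hdot + hint
    have hgoal : lam ≤ 1 - h * μ / L := le_of_mul_le_mul_right key hs
    have heq : 1 - h * μ / L = 1 - h / (L / μ) := by
      rw [div_div_eq_mul_div]
    linarith [hgoal, heq.le]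
  · -- M u = lam u with M = (1-4h) I + (h/L) H
    have eu : (1 - 4 * h) • u + ((1 / L) * h) • H.mulVec u = lam • u := by
      have := congrArg₂ (· - ·) e1 e2
      simp only [hA, hB] at this
      have hHu : H.mulVec u = H.mulVec x - H.mulVec y := by
        simp [hu, mulVec_sub]
      funext i
      have h1 := congrFun this i
      have h2 := congrFun hHu i
      simp only [Pi.add_apply, Pi.sub_apply, Pi.smul_apply, smul_eq_mul, hu] at h1 h2 ⊢
      linear_combination h1 + (1 / L * h) * h2
    have hdot := congrArg (fun z => u ⬝ᵥ z) eu
    simp only [dotProduct_add, dotProduct_smul, smul_eq_mul] at hdot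
    have hs : 0 < u ⬝ᵥ u := by
      have h0 : 0 ≤ u ⬝ᵥ u := Finset.sum_nonneg fun i _ => mul_self_nonneg (u i)
      rcases h0.lt_or_eq with hp | hp
      · exact hp
      · exact absurd ((dotProduct_self_eq_zero).mp hp.symm) hune
    have hq := quad_upp u
    have hcoef : (0:ℝ) ≤ (1 / L) * h := by positivity
    have hcancel : (1 / L * h) * (L * (u ⬝ᵥ u)) = h * (u ⬝ᵥ u) := by
      field_simp
    have key : lam * (u ⬝ᵥ u) ≤ (1 - 3 * h) * (u ⬝ᵥ u) := by
      have hint := mul_le_mul_of_nonneg_left hq hcoef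
      linear_combination -hdot + hint + hcancel
    have hgoal : lam ≤ 1 - 3 * h := le_of_mul_le_mul_right key hs
    have hfin : 1 - 3 * h ≤ 1 - h / (L / μ) := by
      rw [div_div_eq_mul_div]
      have : h * μ / L ≤ h := by
        rw [div_le_iff₀ hL]
        nlinarith
      linarith
    linarith
end

section
/- Let (β^m, g̃^m) be ℝ^d-valued random sequences updated as follows: a coordinate r_m uniform on {1,...,d} is drawn independently, and β^{m+1}_{r_m} = ∂_{r_m}f(y^m), g̃^{m+1}_{r_m} = ∂_{r_m}f(x^m), with all other coordinates unchanged. Then E|β^{m+1} − g̃^{m+1}|² ≤ (1 − 1/d)E|β^m − g̃^m|² + (L²/d)E|y^m − x^m|², provided ∇f is L-Lipschitz. -/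
open MeasureTheory Finset

lemma rcad_norm_sq_eq {d : ℕ} (v : EuclideanSpace ℝ (Fin d)) :
    ‖v‖ ^ 2 = ∑ i, (v i) ^ 2 := by
  rw [EuclideanSpace.norm_eq, Real.sq_sqrt (by positivity)]
  simp [sq_abs]

lemma rcad_term_eq {d : ℕ} (v : EuclideanSpace ℝ (Fin d)) (c : ℝ) (r : Fin d) :
    ‖v + (c - v r) • EuclideanSpace.single r (1 : ℝ)‖ ^ 2
      = ‖v‖ ^ 2 - (v r) ^ 2 + c ^ 2 := by
  rw [rcad_norm_sq_eq, rcad_norm_sq_eq]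
  have hco : ∀ i, (v + (c - v r) • EuclideanSpace.single r (1 : ℝ)) i
      = if i = r then c else v i := by
    intro i
    simp only [PiLp.add_apply, PiLp.smul_apply, EuclideanSpace.single_apply, smul_eq_mul]
    by_cases h : i = r
    · rw [if_pos h, if_pos h]; subst h; ring
    · rw [if_neg h, if_neg h]; ring
  simp only [hco]
  rw [← Finset.add_sum_erase _ _ (Finset.mem_univ r),
      ← Finset.add_sum_erase _ (fun i => (v i) ^ 2) (Finset.mem_univ r)]
  have : ∀ i ∈ Finset.univ.erase r, (if i = r then c else v i) ^ 2 = (v i) ^ 2 := by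
    intro i hi
    simp [Finset.ne_of_mem_erase hi]
  rw [Finset.sum_congr rfl this]
  simp
  ring

/-- One step of the randomized-coordinate averaging update: if `β` and `g̃` are both updated
at the same uniformly random coordinate `r` to `∂_r f(y)` and `∂_r f(x)` respectively, then
`E|β' − g̃'|² ≤ (1 − 1/d) E|β − g̃|² + (L²/d) E|y − x|²`, provided `∇f` is `L`-Lipschitz.
Here the expectation over the independent uniform coordinate `r` is written as the average
`(1/d)∑_r`, and the updated vector is expressed as `β + (∂_r f(y) − β_r)e^r`. -/
theorem rcad_gradient_memory_contraction (d : ℕ) (hd : 0 < d)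
    (f : EuclideanSpace ℝ (Fin d) → ℝ) (hf : Differentiable ℝ f) (L : ℝ)
    (hL : ∀ x x' : EuclideanSpace ℝ (Fin d),
      ‖gradient f x - gradient f x'‖ ≤ L * ‖x - x'‖)
    {Ω : Type*} [MeasurableSpace Ω] (P : Measure Ω) [IsProbabilityMeasure P]
    (x y β g : Ω → EuclideanSpace ℝ (Fin d))
    (hint1 : Integrable (fun ω => ‖β ω - g ω‖ ^ 2) P)
    (hint2 : Integrable (fun ω => ‖y ω - x ω‖ ^ 2) P)
    (hint3 : Integrable (fun ω => ((d : ℝ))⁻¹ * ∑ r : Fin d,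
      ‖(β ω + (gradient f (y ω) r - β ω r) • EuclideanSpace.single r (1 : ℝ))
        - (g ω + (gradient f (x ω) r - g ω r) • EuclideanSpace.single r (1 : ℝ))‖ ^ 2) P) :
    ∫ ω, ((d : ℝ))⁻¹ * ∑ r : Fin d,
        ‖(β ω + (gradient f (y ω) r - β ω r) • EuclideanSpace.single r (1 : ℝ))
          - (g ω + (gradient f (x ω) r - g ω r) • EuclideanSpace.single r (1 : ℝ))‖ ^ 2 ∂P
      ≤ (1 - 1 / (d : ℝ)) * ∫ ω, ‖β ω - g ω‖ ^ 2 ∂P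
        + L ^ 2 / (d : ℝ) * ∫ ω, ‖y ω - x ω‖ ^ 2 ∂P := by
  have hd' : (0 : ℝ) < d := Nat.cast_pos.mpr hd
  have hpt : ∀ ω, ((d : ℝ))⁻¹ * ∑ r : Fin d,
      ‖(β ω + (gradient f (y ω) r - β ω r) • EuclideanSpace.single r (1 : ℝ))
        - (g ω + (gradient f (x ω) r - g ω r) • EuclideanSpace.single r (1 : ℝ))‖ ^ 2
      ≤ (1 - 1 / (d : ℝ)) * ‖β ω - g ω‖ ^ 2 + L ^ 2 / (d : ℝ) * ‖y ω - x ω‖ ^ 2 := by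
    intro ω
    set v : EuclideanSpace ℝ (Fin d) := β ω - g ω with hv
    have hterm : ∀ r : Fin d,
        (β ω + (gradient f (y ω) r - β ω r) • EuclideanSpace.single r (1 : ℝ))
          - (g ω + (gradient f (x ω) r - g ω r) • EuclideanSpace.single r (1 : ℝ))
        = v + ((gradient f (y ω) r - gradient f (x ω) r) - v r) •
            EuclideanSpace.single r (1 : ℝ) := by
      intro r
      simp only [hv, PiLp.sub_apply]
      module
    have hsum : ∑ r : Fin d,
        ‖(β ω + (gradient f (y ω) r - β ω r) • EuclideanSpace.single r (1 : ℝ))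
          - (g ω + (gradient f (x ω) r - g ω r) • EuclideanSpace.single r (1 : ℝ))‖ ^ 2
        = (d : ℝ) * ‖v‖ ^ 2 - ‖v‖ ^ 2 + ‖gradient f (y ω) - gradient f (x ω)‖ ^ 2 := by
      have : ∀ r : Fin d,
          ‖(β ω + (gradient f (y ω) r - β ω r) • EuclideanSpace.single r (1 : ℝ))
            - (g ω + (gradient f (x ω) r - g ω r) • EuclideanSpace.single r (1 : ℝ))‖ ^ 2
          = ‖v‖ ^ 2 - (v r) ^ 2 + (gradient f (y ω) r - gradient f (x ω) r) ^ 2 := by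
        intro r
        rw [hterm r, rcad_term_eq]
      rw [Finset.sum_congr rfl (fun r _ => this r)]
      have e1 : ∑ r, (v r) ^ 2 = ‖v‖ ^ 2 := (rcad_norm_sq_eq v).symm
      have e2 : ∑ r : Fin d, (gradient f (y ω) r - gradient f (x ω) r) ^ 2
          = ‖gradient f (y ω) - gradient f (x ω)‖ ^ 2 := by
        rw [rcad_norm_sq_eq]; simp
      rw [Finset.sum_add_distrib, Finset.sum_sub_distrib, Finset.sum_const,
        Finset.card_univ, Fintype.card_fin, e1, e2, nsmul_eq_mul]
    rw [hsum]
    have hlip : ‖gradient f (y ω) - gradient f (x ω)‖ ^ 2 ≤ L ^ 2 * ‖y ω - x ω‖ ^ 2 := by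
      calc ‖gradient f (y ω) - gradient f (x ω)‖ ^ 2
          ≤ (L * ‖y ω - x ω‖) ^ 2 :=
            pow_le_pow_left₀ (norm_nonneg _) (hL (y ω) (x ω)) 2
        _ = L ^ 2 * ‖y ω - x ω‖ ^ 2 := by ring
    have h1 : ((d : ℝ))⁻¹ * ((d : ℝ) * ‖v‖ ^ 2 - ‖v‖ ^ 2 + ‖gradient f (y ω) - gradient f (x ω)‖ ^ 2)
        = (1 - 1 / (d : ℝ)) * ‖v‖ ^ 2 + ((d : ℝ))⁻¹ * ‖gradient f (y ω) - gradient f (x ω)‖ ^ 2 := by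
      field_simp
    rw [h1]
    have h2 := mul_le_mul_of_nonneg_left hlip (by positivity : (0:ℝ) ≤ ((d:ℝ))⁻¹)
    have h3 : ((d:ℝ))⁻¹ * (L ^ 2 * ‖y ω - x ω‖ ^ 2) = L ^ 2 / (d:ℝ) * ‖y ω - x ω‖ ^ 2 := by
      ring
    linarith
  calc ∫ ω, ((d : ℝ))⁻¹ * ∑ r : Fin d,
        ‖(β ω + (gradient f (y ω) r - β ω r) • EuclideanSpace.single r (1 : ℝ))
          - (g ω + (gradient f (x ω) r - g ω r) • EuclideanSpace.single r (1 : ℝ))‖ ^ 2 ∂P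
      ≤ ∫ ω, ((1 - 1 / (d : ℝ)) * ‖β ω - g ω‖ ^ 2 + L ^ 2 / (d : ℝ) * ‖y ω - x ω‖ ^ 2) ∂P := by
        exact integral_mono hint3 ((hint1.const_mul _).add (hint2.const_mul _)) hpt
    _ = (1 - 1 / (d : ℝ)) * ∫ ω, ‖β ω - g ω‖ ^ 2 ∂P
        + L ^ 2 / (d : ℝ) * ∫ ω, ‖y ω - x ω‖ ^ 2 ∂P := by
        rw [integral_add (hint1.const_mul _) (hint2.const_mul _),
          integral_const_mul, integral_const_mul]
end
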